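/- If U and T are right amenable semigroups with a semigroup homomorphism ρ: T → End(U), then the semidirect product F = U ×_ρ T with operation (u,a)(v,b) = (u·ρ_a(v), ab) is right amenable. -/

import Mathlib

open Finset
open scoped Classical

section FinitelyAdditive
variable {α : Type*} {ν : Set α → ℝ}

lemma nu_empty (hadd : ∀ A B : Set α, Disjoint A B → ν (A ∪ B) = ν A + ν B) : ν ∅ = 0 := by
  have h := hadd ∅ ∅ (by simp); simp at h; linarith

lemma nu_mono (hpos : ∀ A : Set α, 0 ≤ ν A)
    (hadd : ∀ A B : Set α, Disjoint A B → ν (A ∪ B) = ν A + ν B)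
    {A B : Set α} (h : A ⊆ B) : ν A ≤ ν B := by
  have h2 := hadd A (B \ A) Set.disjoint_sdiff_right
  rw [Set.union_diff_cancel h] at h2
  linarith [hpos (B \ A)]

lemma nu_sum {ι : Type*} [DecidableEq ι]
    (hadd : ∀ A B : Set α, Disjoint A B → ν (A ∪ B) = ν A + ν B)
    (s : Finset ι) (F : ι → Set α)
    (hdisj : ∀ i ∈ s, ∀ j ∈ s, i ≠ j → Disjoint (F i) (F j)) :
    ν (⋃ i ∈ s, F i) = ∑ i ∈ s, ν (F i) := by
  induction s using Finset.induction with
  | empty => simpa using nu_empty hadd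
  | @insert a s ha ih =>
      rw [Finset.set_biUnion_insert, hadd _ _ ?_, Finset.sum_insert ha,
        ih (fun i hi j hj hij => hdisj i (mem_insert_of_mem hi) j (mem_insert_of_mem hj) hij)]
      rw [Set.disjoint_iUnion₂_right]
      intro i hi
      exact hdisj a (mem_insert_self a s) i (mem_insert_of_mem hi) (fun h => ha (h ▸ hi))

lemma countLemma {ι κ : Type} [Fintype ι] [Fintype κ]
    (hpos : ∀ A : Set α, 0 ≤ ν A)
    (hadd : ∀ A B : Set α, Disjoint A B → ν (A ∪ B) = ν A + ν B)
    (A : ι → Set α) (B : κ → Set α)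
    (h : ∀ t, (univ.filter fun i => t ∈ A i).card ≤ (univ.filter fun j => t ∈ B j).card) :
    ∑ i, ν (A i) ≤ ∑ j, ν (B j) := by
  set C : ι ⊕ κ → Set α := Sum.elim A B with hC
  set atom : Finset (ι ⊕ κ) → Set α := fun s => {t | ∀ k, t ∈ C k ↔ k ∈ s} with hatom
  have hdisj : ∀ s s' : Finset (ι ⊕ κ), s ≠ s' → Disjoint (atom s) (atom s') := by
    intro s s' hne
    rw [Set.disjoint_left]
    intro t hts hts'
    apply hne
    ext k
    rw [← (hts k), (hts' k)]
  have hCk : ∀ k, ν (C k) =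
      ∑ s ∈ univ.filter (fun s : Finset (ι ⊕ κ) => k ∈ s), ν (atom s) := by
    intro k
    rw [← nu_sum hadd _ _ (fun s _ s' _ hne => hdisj s s' hne)]
    congr 1
    ext t
    simp only [Set.mem_iUnion, mem_filter, mem_univ, true_and]
    constructor
    · intro ht
      exact ⟨univ.filter (fun k' => t ∈ C k'), by simpa using ht, fun k' => by simp⟩
    · rintro ⟨s, hks, hts⟩
      exact (hts k).2 hks
  have key : ∀ (β : Type) (_ : Fintype β) (D : β → ι ⊕ κ),
      ∑ b : β, ν (C (D b)) =
        ∑ s : Finset (ι ⊕ κ), ((univ.filter fun b : β => D b ∈ s).card : ℝ) * ν (atom s) := by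
    intro β _ D
    calc ∑ b : β, ν (C (D b))
        = ∑ b : β, ∑ s ∈ univ.filter (fun s : Finset (ι ⊕ κ) => D b ∈ s), ν (atom s) :=
          Finset.sum_congr rfl fun b _ => hCk (D b)
      _ = ∑ b : β, ∑ s : Finset (ι ⊕ κ), if D b ∈ s then ν (atom s) else 0 := by
          simp [Finset.sum_filter]
      _ = ∑ s : Finset (ι ⊕ κ), ∑ b : β, if D b ∈ s then ν (atom s) else 0 := Finset.sum_comm
      _ = ∑ s : Finset (ι ⊕ κ), ((univ.filter fun b : β => D b ∈ s).card : ℝ) * ν (atom s) := by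
          refine Finset.sum_congr rfl fun s _ => ?_
          rw [← Finset.sum_filter, Finset.sum_const, nsmul_eq_mul]
  have hA : ∑ i, ν (A i) = ∑ s : Finset (ι ⊕ κ),
      ((univ.filter fun i : ι => Sum.inl i ∈ s).card : ℝ) * ν (atom s) := key ι _ Sum.inl
  have hB : ∑ j, ν (B j) = ∑ s : Finset (ι ⊕ κ),
      ((univ.filter fun j : κ => Sum.inr j ∈ s).card : ℝ) * ν (atom s) := key κ _ Sum.inr
  rw [hA, hB]
  refine Finset.sum_le_sum fun s _ => ?_
  rcases Set.eq_empty_or_nonempty (atom s) with he | ⟨t, ht⟩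
  · rw [he, nu_empty hadd, mul_zero, mul_zero]
  · refine mul_le_mul_of_nonneg_right ?_ (hpos _)
    have h1 : (univ.filter fun i : ι => Sum.inl i ∈ s) = univ.filter fun i => t ∈ A i := by
      ext i; simp only [mem_filter, mem_univ, true_and]
      exact ((ht (Sum.inl i)).symm : Sum.inl i ∈ s ↔ t ∈ A i)
    have h2 : (univ.filter fun j : κ => Sum.inr j ∈ s) = univ.filter fun j => t ∈ B j := by
      ext j; simp only [mem_filter, mem_univ, true_and]
      exact ((ht (Sum.inr j)).symm : Sum.inr j ∈ s ↔ t ∈ B j)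
    rw [h1, h2]
    exact_mod_cast h t
end FinitelyAdditive

section Floors

lemma count_floor {x : ℝ} (hx0 : 0 ≤ x) (hx1 : x ≤ 1) {n : ℕ} (hn : 0 < n) :
    ((range n).filter fun k : ℕ => ((k : ℝ) + 1) / n ≤ x).card = ⌊x * n⌋₊ := by
  have hnn : (0 : ℝ) < n := by exact_mod_cast hn
  have hcond : ∀ k : ℕ, (((k : ℝ) + 1) / n ≤ x ↔ k < ⌊x * n⌋₊) := by
    intro k
    rw [div_le_iff₀ hnn, Nat.lt_iff_add_one_le]
    rw [Nat.le_floor_iff (by positivity)]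
    push_cast
    rfl
  have h1 : ((range n).filter fun k : ℕ => ((k : ℝ) + 1) / n ≤ x)
      = (range n).filter fun k : ℕ => k < ⌊x * n⌋₊ :=
    Finset.filter_congr fun k _ => by rw [hcond k]
  rw [h1]
  have hle : ⌊x * n⌋₊ ≤ n := by
    calc ⌊x * n⌋₊ ≤ ⌊(n : ℝ)⌋₊ := Nat.floor_le_floor (by nlinarith)
      _ = n := Nat.floor_natCast n
  have h2 : (range n).filter (fun k : ℕ => k < ⌊x * n⌋₊) = range ⌊x * n⌋₊ := by
    ext k
    simp only [mem_filter, mem_range]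
    omega
  rw [h2, card_range]

lemma floor_add_le {x y : ℝ} (hx : 0 ≤ x) (hy : 0 ≤ y) : ⌊x⌋₊ + ⌊y⌋₊ ≤ ⌊x + y⌋₊ := by
  rw [Nat.le_floor_iff (by positivity)]
  push_cast
  linarith [Nat.floor_le hx, Nat.floor_le hy]

lemma floor_add_ge {x y : ℝ} (hx : 0 ≤ x) (hy : 0 ≤ y) : ⌊x + y⌋₊ ≤ ⌊x⌋₊ + ⌊y⌋₊ + 1 := by
  have h1 := Nat.lt_floor_add_one x
  have h2 := Nat.lt_floor_add_one y
  have : ⌊x + y⌋₊ < ⌊x⌋₊ + ⌊y⌋₊ + 2 := by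
    rw [Nat.floor_lt (by positivity)]
    push_cast
    linarith
  omega

lemma floor_mul_le {x : ℝ} (hx : 0 ≤ x) (q : ℕ) : q * ⌊x⌋₊ ≤ ⌊(q : ℝ) * x⌋₊ := by
  rw [Nat.le_floor_iff (by positivity)]
  push_cast
  exact mul_le_mul_of_nonneg_left (Nat.floor_le hx) (by positivity)

lemma floor_mul_ge {x : ℝ} (hx : 0 ≤ x) {q : ℕ} (hq : 0 < q) :
    ⌊(q : ℝ) * x⌋₊ ≤ q * ⌊x⌋₊ + q := by
  have h1 := Nat.lt_floor_add_one x
  have : ⌊(q : ℝ) * x⌋₊ < q * ⌊x⌋₊ + q + 1 := by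
    rw [Nat.floor_lt (by positivity)]
    push_cast
    nlinarith [(by exact_mod_cast hq : (0:ℝ) < q)]
  omega

end Floors

section CardFilter

lemma card_filter_fin (n : ℕ) (p : ℕ → Prop) :
    (univ.filter fun k : Fin n => p k).card = ((range n).filter p).card := by
  rw [Finset.card_filter, Finset.card_filter,
    ← Fin.sum_univ_eq_sum_range (fun k => if p k then 1 else 0) n]

lemma card_filter_snd {β γ : Type} [Fintype β] [Fintype γ] (p : γ → Prop) :
    (univ.filter fun x : β × γ => p x.2).card = Fintype.card β * (univ.filter p).card := by
  have h : (univ.filter fun x : β × γ => p x.2) = univ ×ˢ univ.filter p := by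
    ext ⟨b, c⟩
    simp
  rw [h, Finset.card_product, Finset.card_univ]

lemma card_filter_sumt {β γ : Type} [Fintype β] [Fintype γ] (p : β ⊕ γ → Prop) :
    (univ.filter p).card
      = (univ.filter fun b => p (Sum.inl b)).card + (univ.filter fun c => p (Sum.inr c)).card := by
  have h : univ.filter p
      = ((univ.filter fun b => p (Sum.inl b)).map ⟨Sum.inl, Sum.inl_injective⟩)
        ∪ ((univ.filter fun c => p (Sum.inr c)).map ⟨Sum.inr, Sum.inr_injective⟩) := by
    ext x
    cases x <;> simp
  rw [h, Finset.card_union_of_disjoint (by simp [Finset.disjoint_left]),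
    Finset.card_map, Finset.card_map]

end CardFilter

section DDsec
variable {α : Type*}

def lev (f : α → ℝ) (n k : ℕ) : Set α := {t | ((k : ℝ) + 1) / n ≤ f t}

noncomputable def DD (ν : Set α → ℝ) (n : ℕ) (f : α → ℝ) : ℝ :=
  (∑ k : Fin n, ν (lev f n k)) / n

variable {ν : Set α → ℝ}

lemma card_lev (f : α → ℝ) {n : ℕ} (hn : 0 < n) {t : α} (h0 : 0 ≤ f t) (h1 : f t ≤ 1) :
    (univ.filter fun k : Fin n => t ∈ lev f n k).card = ⌊f t * n⌋₊ := by
  rw [card_filter_fin n (fun k => t ∈ lev f n k)]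
  exact count_floor h0 h1 hn

lemma card_lev_prod (f : α → ℝ) {m q : ℕ} (hm : 0 < m) {t : α} (h0 : 0 ≤ f t) (h1 : f t ≤ 1) :
    (univ.filter fun p : Fin q × Fin m => t ∈ lev f m p.2).card = q * ⌊f t * m⌋₊ := by
  rw [card_filter_snd (fun k : Fin m => t ∈ lev f m k), card_lev f hm h0 h1, Fintype.card_fin]

lemma DD_nonneg (hpos : ∀ A : Set α, 0 ≤ ν A) (n : ℕ) (f : α → ℝ) : 0 ≤ DD ν n f :=
  div_nonneg (Finset.sum_nonneg fun _ _ => hpos _) (Nat.cast_nonneg n)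

lemma DD_le_one (hpos : ∀ A : Set α, 0 ≤ ν A)
    (hadd : ∀ A B : Set α, Disjoint A B → ν (A ∪ B) = ν A + ν B)
    (hone : ν Set.univ = 1) {n : ℕ} (hn : 0 < n) (f : α → ℝ) : DD ν n f ≤ 1 := by
  have hterm : ∀ k : Fin n, ν (lev f n k) ≤ 1 := fun k =>
    hone ▸ nu_mono hpos hadd (Set.subset_univ _)
  have hsum : ∑ k : Fin n, ν (lev f n k) ≤ n := by
    calc ∑ k : Fin n, ν (lev f n k) ≤ ∑ _k : Fin n, (1 : ℝ) :=
          Finset.sum_le_sum fun k _ => hterm k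
      _ = n := by simp
  rw [DD, div_le_one (by exact_mod_cast hn)]
  exact hsum

lemma sum_prod_snd {q m : ℕ} (F : ℕ → ℝ) :
    ∑ p : Fin q × Fin m, F p.2 = q * ∑ k : Fin m, F k := by
  rw [Fintype.sum_prod_type]
  have h : ∀ a : Fin q, ∑ b : Fin m, F ((a, b).2 : Fin m) = ∑ b : Fin m, F b :=
    fun a => Finset.sum_congr rfl fun b _ => rfl
  rw [Finset.sum_congr rfl fun a _ => h a, Finset.sum_const, Finset.card_univ,
    Fintype.card_fin, nsmul_eq_mul]

lemma DD_mono (hpos : ∀ A : Set α, 0 ≤ ν A)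
    (hadd : ∀ A B : Set α, Disjoint A B → ν (A ∪ B) = ν A + ν B)
    {f : α → ℝ} (hf0 : ∀ t, 0 ≤ f t) (hf1 : ∀ t, f t ≤ 1)
    {m q : ℕ} (hm : 0 < m) (hq : 0 < q) :
    DD ν m f ≤ DD ν (m * q) f := by
  have key : ∑ p : Fin q × Fin m, ν (lev f m p.2) ≤ ∑ k : Fin (m * q), ν (lev f (m * q) k) := by
    refine countLemma hpos hadd _ _ fun t => ?_
    have hR : (univ.filter fun k : Fin (m * q) => t ∈ lev f (m * q) k).card
        = ⌊f t * ((m * q : ℕ) : ℝ)⌋₊ := card_lev f (Nat.mul_pos hm hq) (hf0 t) (hf1 t)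
    rw [card_lev_prod f hm (hf0 t) (hf1 t), hR]
    calc q * ⌊f t * m⌋₊ ≤ ⌊(q : ℝ) * (f t * m)⌋₊ :=
          floor_mul_le (mul_nonneg (hf0 t) (Nat.cast_nonneg m)) q
      _ = ⌊f t * ((m * q : ℕ) : ℝ)⌋₊ := by congr 1; push_cast; ring
  rw [sum_prod_snd (fun k => ν (lev f m k))] at key
  rw [DD, DD, div_le_div_iff₀ (by exact_mod_cast hm) (by exact_mod_cast Nat.mul_pos hm hq)]
  push_cast
  nlinarith [key, (by exact_mod_cast hm : (0:ℝ) < m)]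

lemma DD_anti (hpos : ∀ A : Set α, 0 ≤ ν A)
    (hadd : ∀ A B : Set α, Disjoint A B → ν (A ∪ B) = ν A + ν B)
    (hone : ν Set.univ = 1)
    {f : α → ℝ} (hf0 : ∀ t, 0 ≤ f t) (hf1 : ∀ t, f t ≤ 1)
    {m q : ℕ} (hm : 0 < m) (hq : 0 < q) :
    DD ν (m * q) f ≤ DD ν m f + 1 / m := by
  set B : (Fin q × Fin m) ⊕ Fin q → Set α :=
    Sum.elim (fun p => lev f m p.2) (fun _ => Set.univ) with hB
  have key : ∑ k : Fin (m * q), ν (lev f (m * q) k) ≤ ∑ j, ν (B j) := by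
    refine countLemma hpos hadd _ _ fun t => ?_
    have hL : (univ.filter fun k : Fin (m * q) => t ∈ lev f (m * q) k).card
        = ⌊f t * ((m * q : ℕ) : ℝ)⌋₊ := card_lev f (Nat.mul_pos hm hq) (hf0 t) (hf1 t)
    have hR : (univ.filter fun j => t ∈ B j).card = q * ⌊f t * m⌋₊ + q := by
      rw [card_filter_sumt (fun j => t ∈ B j)]
      have h1 : (univ.filter fun p : Fin q × Fin m => t ∈ B (Sum.inl p)).card
          = q * ⌊f t * m⌋₊ := card_lev_prod f hm (hf0 t) (hf1 t)
      have h2 : (univ.filter fun j : Fin q => t ∈ B (Sum.inr j)).card = q := by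
        simp [hB]
      rw [h1, h2]
    rw [hL, hR]
    calc ⌊f t * ((m * q : ℕ) : ℝ)⌋₊ = ⌊(q : ℝ) * (f t * m)⌋₊ := by congr 1; push_cast; ring
      _ ≤ q * ⌊f t * m⌋₊ + q := floor_mul_ge (mul_nonneg (hf0 t) (Nat.cast_nonneg m)) hq
  have hBsum : ∑ j, ν (B j) = q * (∑ k : Fin m, ν (lev f m k)) + q := by
    rw [Fintype.sum_sum_type]
    have h1 : ∑ p : Fin q × Fin m, ν (B (Sum.inl p)) = q * ∑ k : Fin m, ν (lev f m k) :=
      sum_prod_snd (fun k => ν (lev f m k))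
    have h2 : ∑ j : Fin q, ν (B (Sum.inr j)) = q := by
      simp [hB, hone]
    rw [h1, h2]
  rw [hBsum] at key
  rw [DD, DD, ← add_div, div_le_div_iff₀ (by exact_mod_cast Nat.mul_pos hm hq)
    (by exact_mod_cast hm)]
  push_cast
  nlinarith [key, (by exact_mod_cast hm : (0:ℝ) < m)]

lemma DD_add_le (hpos : ∀ A : Set α, 0 ≤ ν A)
    (hadd : ∀ A B : Set α, Disjoint A B → ν (A ∪ B) = ν A + ν B)
    {f g : α → ℝ} (hf0 : ∀ t, 0 ≤ f t) (hg0 : ∀ t, 0 ≤ g t)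
    (hfg1 : ∀ t, f t + g t ≤ 1) {n : ℕ} (hn : 0 < n) :
    DD ν n f + DD ν n g ≤ DD ν n (fun t => f t + g t) := by
  have hf1 : ∀ t, f t ≤ 1 := fun t => by linarith [hg0 t, hfg1 t]
  have hg1 : ∀ t, g t ≤ 1 := fun t => by linarith [hf0 t, hfg1 t]
  set A : Fin n ⊕ Fin n → Set α := Sum.elim (fun k => lev f n k) (fun k => lev g n k) with hA
  have key : ∑ j, ν (A j) ≤ ∑ k : Fin n, ν (lev (fun t => f t + g t) n k) := by
    refine countLemma hpos hadd _ _ fun t => ?_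
    have hL : (univ.filter fun j => t ∈ A j).card = ⌊f t * n⌋₊ + ⌊g t * n⌋₊ := by
      rw [card_filter_sumt (fun j => t ∈ A j)]
      have h1 : (univ.filter fun k : Fin n => t ∈ A (Sum.inl k)).card = ⌊f t * n⌋₊ :=
        card_lev f hn (hf0 t) (hf1 t)
      have h2 : (univ.filter fun k : Fin n => t ∈ A (Sum.inr k)).card = ⌊g t * n⌋₊ :=
        card_lev g hn (hg0 t) (hg1 t)
      rw [h1, h2]
    have hR : (univ.filter fun k : Fin n => t ∈ lev (fun t => f t + g t) n k).card
        = ⌊(f t + g t) * n⌋₊ :=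
      card_lev _ hn (add_nonneg (hf0 t) (hg0 t)) (hfg1 t)
    rw [hL, hR]
    calc ⌊f t * n⌋₊ + ⌊g t * n⌋₊ ≤ ⌊f t * n + g t * n⌋₊ :=
          floor_add_le (mul_nonneg (hf0 t) (Nat.cast_nonneg n))
            (mul_nonneg (hg0 t) (Nat.cast_nonneg n))
      _ = ⌊(f t + g t) * n⌋₊ := by congr 1; ring
  have hAsum : ∑ j, ν (A j) = (∑ k : Fin n, ν (lev f n k)) + ∑ k : Fin n, ν (lev g n k) := by
    rw [Fintype.sum_sum_type]; rfl
  rw [hAsum] at key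
  rw [DD, DD, DD, ← add_div, div_le_div_iff₀ (by exact_mod_cast hn) (by exact_mod_cast hn)]
  nlinarith [key, (by exact_mod_cast hn : (0:ℝ) < n)]

lemma DD_le_add (hpos : ∀ A : Set α, 0 ≤ ν A)
    (hadd : ∀ A B : Set α, Disjoint A B → ν (A ∪ B) = ν A + ν B)
    (hone : ν Set.univ = 1)
    {f g : α → ℝ} (hf0 : ∀ t, 0 ≤ f t) (hg0 : ∀ t, 0 ≤ g t)
    (hfg1 : ∀ t, f t + g t ≤ 1) {n : ℕ} (hn : 0 < n) :
    DD ν n (fun t => f t + g t) ≤ DD ν n f + DD ν n g + 1 / n := by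
  have hf1 : ∀ t, f t ≤ 1 := fun t => by linarith [hg0 t, hfg1 t]
  have hg1 : ∀ t, g t ≤ 1 := fun t => by linarith [hf0 t, hfg1 t]
  set B : (Fin n ⊕ Fin n) ⊕ Fin 1 → Set α :=
    Sum.elim (Sum.elim (fun k => lev f n k) (fun k => lev g n k)) (fun _ => Set.univ) with hB
  have key : ∑ k : Fin n, ν (lev (fun t => f t + g t) n k) ≤ ∑ j, ν (B j) := by
    refine countLemma hpos hadd _ _ fun t => ?_
    have hL : (univ.filter fun k : Fin n => t ∈ lev (fun t => f t + g t) n k).card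
        = ⌊(f t + g t) * n⌋₊ := card_lev _ hn (add_nonneg (hf0 t) (hg0 t)) (hfg1 t)
    have hR : (univ.filter fun j => t ∈ B j).card = (⌊f t * n⌋₊ + ⌊g t * n⌋₊) + 1 := by
      rw [card_filter_sumt (fun j => t ∈ B j)]
      have h1 : (univ.filter fun j : Fin n ⊕ Fin n => t ∈ B (Sum.inl j)).card
          = ⌊f t * n⌋₊ + ⌊g t * n⌋₊ := by
        rw [card_filter_sumt (fun j : Fin n ⊕ Fin n => t ∈ B (Sum.inl j))]
        have ha : (univ.filter fun k : Fin n => t ∈ B (Sum.inl (Sum.inl k))).card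
            = ⌊f t * n⌋₊ := card_lev f hn (hf0 t) (hf1 t)
        have hb : (univ.filter fun k : Fin n => t ∈ B (Sum.inl (Sum.inr k))).card
            = ⌊g t * n⌋₊ := card_lev g hn (hg0 t) (hg1 t)
        rw [ha, hb]
      have h2 : (univ.filter fun j : Fin 1 => t ∈ B (Sum.inr j)).card = 1 := by
        simp [hB]
      rw [h1, h2]
    rw [hL, hR]
    calc ⌊(f t + g t) * n⌋₊ = ⌊f t * n + g t * n⌋₊ := by congr 1; ring
      _ ≤ (⌊f t * n⌋₊ + ⌊g t * n⌋₊) + 1 :=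
          floor_add_ge (mul_nonneg (hf0 t) (Nat.cast_nonneg n))
            (mul_nonneg (hg0 t) (Nat.cast_nonneg n))
  have hBsum : ∑ j, ν (B j)
      = ((∑ k : Fin n, ν (lev f n k)) + ∑ k : Fin n, ν (lev g n k)) + 1 := by
    rw [Fintype.sum_sum_type, Fintype.sum_sum_type]
    have h2 : ∑ j : Fin 1, ν (B (Sum.inr j)) = 1 := by simp [hB, hone]
    rw [h2]
    rfl
  rw [hBsum] at key
  rw [DD, DD, DD, ← add_div, ← add_div,
    div_le_div_iff₀ (by exact_mod_cast hn) (by exact_mod_cast hn)]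
  nlinarith [key, (by exact_mod_cast hn : (0:ℝ) < n)]

lemma DD_const_one (hone : ν Set.univ = 1) {n : ℕ} (hn : 0 < n) :
    DD ν n (fun _ : α => (1 : ℝ)) = 1 := by
  have hlev : ∀ k : Fin n, lev (fun _ : α => (1:ℝ)) n (k : ℕ) = Set.univ := by
    intro k
    have hk : ((k : ℕ) : ℝ) + 1 ≤ n := by
      exact_mod_cast Nat.succ_le_of_lt k.isLt
    ext t
    simp only [lev, Set.mem_setOf_eq, Set.mem_univ, iff_true]
    rw [div_le_one (by exact_mod_cast hn)]
    exact hk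
  rw [DD, Finset.sum_congr rfl fun k _ => by rw [hlev k, hone]]
  rw [Finset.sum_const, Finset.card_univ, Fintype.card_fin, nsmul_eq_mul, mul_one,
    div_self (by exact_mod_cast hn.ne')]

end DDsec

section IIsec
variable {α : Type*} {ν : Set α → ℝ}

noncomputable def II (ν : Set α → ℝ) (f : α → ℝ) : ℝ := ⨆ i : ℕ, DD ν (2 ^ i) f

lemma II_bdd (hpos : ∀ A : Set α, 0 ≤ ν A)
    (hadd : ∀ A B : Set α, Disjoint A B → ν (A ∪ B) = ν A + ν B)
    (hone : ν Set.univ = 1) (f : α → ℝ) :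
    BddAbove (Set.range fun i : ℕ => DD ν (2 ^ i) f) := by
  refine ⟨1, ?_⟩
  rintro x ⟨i, rfl⟩
  exact DD_le_one hpos hadd hone (Nat.pow_pos (by norm_num)) f

lemma II_ge (hpos : ∀ A : Set α, 0 ≤ ν A)
    (hadd : ∀ A B : Set α, Disjoint A B → ν (A ∪ B) = ν A + ν B)
    (hone : ν Set.univ = 1) (f : α → ℝ) (i : ℕ) :
    DD ν (2 ^ i) f ≤ II ν f :=
  le_ciSup (II_bdd hpos hadd hone f) i

lemma II_le (hpos : ∀ A : Set α, 0 ≤ ν A)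
    (hadd : ∀ A B : Set α, Disjoint A B → ν (A ∪ B) = ν A + ν B)
    (hone : ν Set.univ = 1) {f : α → ℝ} (hf0 : ∀ t, 0 ≤ f t) (hf1 : ∀ t, f t ≤ 1) (i : ℕ) :
    II ν f ≤ DD ν (2 ^ i) f + 1 / 2 ^ i := by
  refine ciSup_le fun j => ?_
  rcases le_total j i with h | h
  · have hle : DD ν (2 ^ j) f ≤ DD ν (2 ^ i) f := by
      have h2 : (2:ℕ) ^ i = 2 ^ j * 2 ^ (i - j) := by
        rw [← pow_add]
        congr 1
        omega
      rw [h2]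
      exact DD_mono hpos hadd hf0 hf1 (Nat.pow_pos (by norm_num))
        (Nat.pow_pos (by norm_num))
    have : (0:ℝ) < 1 / 2 ^ i := by positivity
    linarith
  · have h2 : (2:ℕ) ^ j = 2 ^ i * 2 ^ (j - i) := by
      rw [← pow_add]
      congr 1
      omega
    have hle : DD ν (2 ^ j) f ≤ DD ν (2 ^ i) f + 1 / (2 ^ i : ℕ) := by
      rw [h2]
      exact DD_anti hpos hadd hone hf0 hf1 (Nat.pow_pos (by norm_num))
        (Nat.pow_pos (by norm_num))
    push_cast at hle
    exact hle

lemma le_of_forall_le_add_two_div_pow {a b : ℝ} (h : ∀ i : ℕ, a ≤ b + 2 / 2 ^ i) : a ≤ b := by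
  by_contra hc
  push_neg at hc
  obtain ⟨i, hi⟩ := exists_pow_lt_of_lt_one (show (0:ℝ) < (a - b) / 2 by linarith)
    (by norm_num : (1:ℝ) / 2 < 1)
  have h2 : ((1:ℝ) / 2) ^ i = 1 / 2 ^ i := by rw [div_pow, one_pow]
  rw [h2] at hi
  have h3 := h i
  have h4 : (2:ℝ) / 2 ^ i = 2 * (1 / 2 ^ i) := by ring
  rw [h4] at h3
  linarith

lemma II_const_one (hone : ν Set.univ = 1) : II ν (fun _ : α => (1:ℝ)) = 1 := by
  have h : ∀ i : ℕ, DD ν (2 ^ i) (fun _ : α => (1:ℝ)) = 1 := fun i =>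
    DD_const_one hone (Nat.pow_pos (by norm_num))
  rw [II, funext h]
  exact ciSup_const

lemma II_add (hpos : ∀ A : Set α, 0 ≤ ν A)
    (hadd : ∀ A B : Set α, Disjoint A B → ν (A ∪ B) = ν A + ν B)
    (hone : ν Set.univ = 1)
    {f g : α → ℝ} (hf0 : ∀ t, 0 ≤ f t) (hg0 : ∀ t, 0 ≤ g t)
    (hfg1 : ∀ t, f t + g t ≤ 1) :
    II ν (fun t => f t + g t) = II ν f + II ν g := by
  have hf1 : ∀ t, f t ≤ 1 := fun t => by linarith [hg0 t, hfg1 t]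
  have hg1 : ∀ t, g t ≤ 1 := fun t => by linarith [hf0 t, hfg1 t]
  have hfg0 : ∀ t, 0 ≤ f t + g t := fun t => add_nonneg (hf0 t) (hg0 t)
  have hpow : ∀ i : ℕ, (0:ℝ) < 2 ^ i := fun i => by positivity
  have hnpos : ∀ i : ℕ, 0 < (2:ℕ) ^ i := fun i => Nat.pow_pos (by norm_num)
  have hcast : ∀ i : ℕ, ((2 ^ i : ℕ) : ℝ) = (2:ℝ) ^ i := fun i => by push_cast; ring
  apply le_antisymm
  · apply le_of_forall_le_add_two_div_pow
    intro i
    have h1 := II_le hpos hadd hone hfg0 hfg1 i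
    have h2 := DD_le_add hpos hadd hone hf0 hg0 hfg1 (hnpos i)
    push_cast at h2
    have h3 := II_ge hpos hadd hone f i
    have h4 := II_ge hpos hadd hone g i
    have : (2:ℝ) / 2 ^ i = 1 / 2 ^ i + 1 / 2 ^ i := by ring
    linarith
  · apply le_of_forall_le_add_two_div_pow
    intro i
    have h1 := II_le hpos hadd hone hf0 hf1 i
    have h2 := II_le hpos hadd hone hg0 hg1 i
    have h3 := DD_add_le hpos hadd hf0 hg0 hfg1 (hnpos i)
    have h4 := II_ge hpos hadd hone (fun t => f t + g t) i
    have : (2:ℝ) / 2 ^ i = 1 / 2 ^ i + 1 / 2 ^ i := by ring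
    linarith

lemma II_nonneg (hpos : ∀ A : Set α, 0 ≤ ν A)
    (hadd : ∀ A B : Set α, Disjoint A B → ν (A ∪ B) = ν A + ν B)
    (hone : ν Set.univ = 1) (f : α → ℝ) : 0 ≤ II ν f :=
  le_trans (DD_nonneg hpos 1 f) (by simpa using II_ge hpos hadd hone f 0)

end IIsec

section Inv
variable {S : Type*} [Mul S] {ν : Set S → ℝ}

lemma DD_inv (hinv : ∀ (a : S) (E : Set S), ν {s | s * a ∈ E} = ν E)
    (n : ℕ) (f : S → ℝ) (b : S) :
    DD ν n (fun t => f (t * b)) = DD ν n f := by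
  rw [DD, DD]
  congr 1
  refine Finset.sum_congr rfl fun k _ => ?_
  have h : lev (fun t => f (t * b)) n (k : ℕ) = {s | s * b ∈ lev f n (k : ℕ)} := rfl
  rw [h, hinv]

lemma II_inv (hinv : ∀ (a : S) (E : Set S), ν {s | s * a ∈ E} = ν E)
    (f : S → ℝ) (b : S) :
    II ν (fun t => f (t * b)) = II ν f := by
  rw [II, II]
  congr 1
  exact funext fun i => DD_inv hinv (2 ^ i) f b

end Inv

/-- A semigroup is right amenable if it carries a finitely additive probability measure on all
subsets which is invariant under right division: `μ(Ta⁻¹) = μ(T)` where `Ta⁻¹ = {s : sa ∈ T}`. -/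
def RightAmenable (S : Type*) [Mul S] : Prop :=
  ∃ μ : Set S → ℝ, μ Set.univ = 1 ∧ (∀ T : Set S, 0 ≤ μ T) ∧
    (∀ T₁ T₂ : Set S, Disjoint T₁ T₂ → μ (T₁ ∪ T₂) = μ T₁ + μ T₂) ∧
    (∀ (a : S) (T : Set S), μ {s | s * a ∈ T} = μ T)

/-- If `U` and `T` are right amenable semigroups and `ρ : T → End(U)` is a homomorphism of
semigroups, then the semidirect product `U ×_ρ T`, with operation
`(u, a)(v, b) = (u · ρ_a(v), ab)`, is right amenable. -/
theorem rightAmenable_semidirect {U T : Type*} [Semigroup U] [Semigroup T]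
    (ρ : T → (U →ₙ* U)) (hρ : ∀ a b : T, ρ (a * b) = (ρ a).comp (ρ b))
    (hU : RightAmenable U) (hT : RightAmenable T) :
    @RightAmenable (U × T) ⟨fun p q => (p.1 * ρ p.2 q.1, p.2 * q.2)⟩ := by
  obtain ⟨μU, hU1, hUpos, hUadd, hUinv⟩ := hU
  obtain ⟨ν, hT1, hTpos, hTadd, hTinv⟩ := hT
  refine ⟨fun P => II ν (fun t => μU {u | (u, t) ∈ P}), ?_, ?_, ?_, ?_⟩
  · have h : (fun t : T => μU {u : U | (u, t) ∈ (Set.univ : Set (U × T))})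
        = fun _ : T => (1:ℝ) := by
      funext t
      have he : {u : U | (u, t) ∈ (Set.univ : Set (U × T))} = Set.univ := by ext u; simp
      rw [he, hU1]
    show II ν (fun t : T => μU {u : U | (u, t) ∈ (Set.univ : Set (U × T))}) = 1
    rw [h, II_const_one hT1]
  · intro P
    exact II_nonneg hTpos hTadd hT1 _
  · intro P₁ P₂ hdisj
    have hdisj' : ∀ t : T, Disjoint {u : U | (u, t) ∈ P₁} {u : U | (u, t) ∈ P₂} := by
      intro t
      rw [Set.disjoint_left] at hdisj ⊢
      intro u h1 h2
      exact hdisj h1 h2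
    have h : (fun t : T => μU {u : U | (u, t) ∈ P₁ ∪ P₂})
        = fun t : T => μU {u : U | (u, t) ∈ P₁} + μU {u : U | (u, t) ∈ P₂} := by
      funext t
      have he : {u : U | (u, t) ∈ P₁ ∪ P₂} = {u : U | (u, t) ∈ P₁} ∪ {u : U | (u, t) ∈ P₂} := rfl
      rw [he, hUadd _ _ (hdisj' t)]
    show II ν (fun t : T => μU {u : U | (u, t) ∈ P₁ ∪ P₂})
        = II ν (fun t : T => μU {u : U | (u, t) ∈ P₁})
          + II ν (fun t : T => μU {u : U | (u, t) ∈ P₂})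
    rw [h]
    refine II_add hTpos hTadd hT1 (fun t => hUpos _) (fun t => hUpos _) (fun t => ?_)
    rw [← hUadd _ _ (hdisj' t)]
    exact hU1 ▸ nu_mono hUpos hUadd (Set.subset_univ _)
  · rintro ⟨v, b⟩ P
    have h : (fun t : T => μU {u : U | (u, t) ∈ {s : U × T |
        (s.1 * ρ s.2 v, s.2 * b) ∈ P}}) = fun t : T => μU {u : U | (u, t * b) ∈ P} := by
      funext t
      have he : {u : U | (u, t) ∈ {s : U × T | (s.1 * ρ s.2 v, s.2 * b) ∈ P}}
          = {u : U | u * (ρ t v) ∈ {u' : U | (u', t * b) ∈ P}} := rfl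
      rw [he, hUinv]
    show II ν (fun t : T => μU {u : U | (u, t) ∈ {s : U × T |
        (s.1 * ρ s.2 v, s.2 * b) ∈ P}}) = II ν (fun t : T => μU {u : U | (u, t) ∈ P})
    rw [h]
    exact II_inv hTinv (fun t : T => μU {u : U | (u, t) ∈ P}) b
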